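/- Let μ and ν be finite Borel measures on ℝ² satisfying μ(dx) ≤ C₁ min(ε^{-1}, |x|^{-1}) dx + C₁ dx and ν(dx) ≤ C₁ |x|^{-1} e^{-c|x|} dx, for constants C₁ < ∞, c > 0 and ε ∈ (0, 1/2). Then there is a constant C₂ (depending only on C₁, c) such that ε^{-1} Σ_{z ∈ ℤ²} μ(B(εz, 2ε)) · ν(B(εz, 3ε)) ≤ C₂ · ε · |log ε|. -/

import Mathlib

open MeasureTheory ProbabilityTheory Real Set
open scoped ENNReal NNReal

/-- The lattice point εz ∈ ℝ² for z ∈ ℤ². -/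
noncomputable def lattPt (ε : ℝ) (z : ℤ × ℤ) : EuclideanSpace ℝ (Fin 2) :=
  (WithLp.equiv 2 (Fin 2 → ℝ)).symm ![ε * z.1, ε * z.2]

section Helpers

open Metric
open scoped ENNReal NNReal

local notation "E2" => EuclideanSpace ℝ (Fin 2)

lemma my_lintegral_norm_polar (f : ℝ → ℝ≥0∞) (hf : Measurable f) :
    ∫⁻ x : E2, f ‖x‖ =
      ENNReal.ofReal (2 * π) * ∫⁻ y in Ioi (0:ℝ), ENNReal.ofReal y * f y := by
  have hdim : Module.finrank ℝ E2 = 2 := finrank_euclideanSpace_fin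
  have key : ∫⁻ x : E2, f ‖x‖ =
      (volume : Measure E2).toSphere univ *
        ∫⁻ y in Ioi (0:ℝ), ENNReal.ofReal y * f y := by
    calc ∫⁻ x : E2, f ‖x‖
        = ∫⁻ x in ({(0:E2)}ᶜ : Set E2), f ‖x‖ := by
          rw [restrict_compl_singleton]
      _ = ∫⁻ x : ({(0:E2)}ᶜ : Set E2), f ‖(x : E2)‖ ∂((volume : Measure E2).comap (↑)) := by
          exact (lintegral_subtype_comap (measurableSet_singleton _).compl
            (fun a : E2 => f ‖a‖)).symm
      _ = ∫⁻ p : sphere (0:E2) 1 × Ioi (0:ℝ), f p.2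
            ∂((volume : Measure E2).toSphere.prod
              (.volumeIoiPow (Module.finrank ℝ E2 - 1))) := by
          rw [← (volume : Measure E2).measurePreserving_homeomorphUnitSphereProd.lintegral_comp
            (f := fun p : sphere (0:E2) 1 × Ioi (0:ℝ) => f p.2)
            (hf.comp (measurable_subtype_coe.comp measurable_snd))]
          simp [homeomorphUnitSphereProd_apply_snd_coe]
      _ = (volume : Measure E2).toSphere univ *
            ∫⁻ r : Ioi (0:ℝ), f r ∂(Measure.volumeIoiPow (Module.finrank ℝ E2 - 1)) := by
          rw [MeasureTheory.lintegral_prod (f := fun p : sphere (0:E2) 1 × Ioi (0:ℝ) => f p.2)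
            ((hf.comp (measurable_subtype_coe.comp measurable_snd)).aemeasurable)]
          simp [lintegral_const, mul_comm]
      _ = _ := by
          congr 1
          rw [hdim]
          rw [Measure.volumeIoiPow,
            lintegral_withDensity_eq_lintegral_mul _
              (f := fun r : Ioi (0:ℝ) => ENNReal.ofReal (r.1 ^ (2-1)))
              (by exact (measurable_subtype_coe.pow_const _).ennreal_ofReal)
              (g := fun r : Ioi (0:ℝ) => f r.1)
              (hf.comp measurable_subtype_coe)]
          rw [show (fun r : Ioi (0:ℝ) => ENNReal.ofReal (r.1 ^ (2-1))) *
              (fun r : Ioi (0:ℝ) => f r.1)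
            = fun r : Ioi (0:ℝ) => (fun y : ℝ => ENNReal.ofReal (y ^ (2-1)) * f y) r.1 from rfl]
          rw [lintegral_subtype_comap measurableSet_Ioi
            (fun y : ℝ => ENNReal.ofReal (y ^ (2-1)) * f y)]
          simp
  rw [key]
  congr 1
  rw [Measure.toSphere_apply_univ, hdim]
  have hball : (volume : Measure E2) (ball (0:E2) 1) = ENNReal.ofReal π := by
    rw [EuclideanSpace.volume_ball]
    have hcard : (Fintype.card (Fin 2)) = 2 := by simp
    rw [hcard]
    norm_num
    rw [← ENNReal.ofReal_pow (Real.sqrt_nonneg _), Real.sq_sqrt pi_nonneg]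
  rw [hball]
  rw [show ((2:ℕ) : ℝ≥0∞) = ENNReal.ofReal 2 by simp, ← ENNReal.ofReal_mul (by norm_num)]

lemma my_radial_bound (C₁ c ε : ℝ) (hC₁ : 0 < C₁) (hc : 0 < c) (hε0 : 0 < ε)
    (hε : ε < 1/2) :
    ∫⁻ y in Ioi (0:ℝ),
        ENNReal.ofReal ((6*C₁*min ε⁻¹ y⁻¹ + C₁) * (C₁ * Real.exp (-c*y)))
      ≤ ENNReal.ofReal (7*C₁^2*(3 + 2/c) * |Real.log ε|) := by
  set W : ℝ → ℝ≥0∞ := fun y =>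
    ENNReal.ofReal ((6*C₁*min ε⁻¹ y⁻¹ + C₁) * (C₁ * Real.exp (-c*y))) with hW
  have hε1 : ε < 1 := by linarith
  have hεinv : 1 ≤ ε⁻¹ := by
    nlinarith [mul_inv_cancel₀ (ne_of_gt hε0), inv_pos.2 hε0]
  -- split the domain
  have hsub : Ioi (0:ℝ) ⊆ Ioc 0 ε ∪ (Ioc ε 1 ∪ Ioi 1) := by
    intro y hy
    rcases le_or_gt y ε with h | h
    · exact Or.inl ⟨hy, h⟩
    · rcases le_or_gt y 1 with h' | h'
      · exact Or.inr (Or.inl ⟨h, h'⟩)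
      · exact Or.inr (Or.inr h')
  have hsplit : ∫⁻ y in Ioi (0:ℝ), W y ≤
      (∫⁻ y in Ioc (0:ℝ) ε, W y) + ((∫⁻ y in Ioc ε 1, W y) + ∫⁻ y in Ioi (1:ℝ), W y) :=
    le_trans (lintegral_mono_set hsub)
      (le_trans (lintegral_union_le _ _ _)
        (by gcongr; exact lintegral_union_le _ _ _))
  -- bound on (0, ε]
  have h1 : ∫⁻ y in Ioc (0:ℝ) ε, W y ≤ ENNReal.ofReal (7*C₁^2) := by
    have hb : ∀ y ∈ Ioc (0:ℝ) ε, W y ≤ ENNReal.ofReal (7*C₁^2*ε⁻¹) := by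
      intro y hy
      apply ENNReal.ofReal_le_ofReal
      have h1 : min ε⁻¹ y⁻¹ ≤ ε⁻¹ := min_le_left _ _
      have h2 : Real.exp (-c*y) ≤ 1 := by
        apply Real.exp_le_one_iff.2; nlinarith [hy.1]
      have h3 : (0:ℝ) < Real.exp (-c*y) := Real.exp_pos _
      have h4 : (0:ℝ) ≤ min ε⁻¹ y⁻¹ := le_min (by positivity) (inv_nonneg.2 hy.1.le)
      calc (6*C₁*min ε⁻¹ y⁻¹ + C₁) * (C₁ * Real.exp (-c*y))
          ≤ (6*C₁*ε⁻¹ + C₁*ε⁻¹) * (C₁ * 1) := by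
            apply mul_le_mul _ _ (by positivity) (by positivity)
            · nlinarith
            · nlinarith
        _ = 7*C₁^2*ε⁻¹ := by ring
    calc ∫⁻ y in Ioc (0:ℝ) ε, W y ≤ ∫⁻ _ in Ioc (0:ℝ) ε, ENNReal.ofReal (7*C₁^2*ε⁻¹) :=
          setLIntegral_mono measurable_const hb
      _ = ENNReal.ofReal (7*C₁^2*ε⁻¹) * volume (Ioc (0:ℝ) ε) := setLIntegral_const _ _
      _ = ENNReal.ofReal (7*C₁^2*ε⁻¹) * ENNReal.ofReal ε := by
          rw [Real.volume_Ioc, sub_zero]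
      _ = ENNReal.ofReal (7*C₁^2) := by
          rw [← ENNReal.ofReal_mul (by positivity)]
          congr 1
          field_simp
  -- bound on (ε, 1]
  have h2 : ∫⁻ y in Ioc ε 1, W y ≤ ENNReal.ofReal (7*C₁^2) * ENNReal.ofReal |Real.log ε| := by
    have hb : ∀ y ∈ Ioc ε 1, W y ≤ ENNReal.ofReal (7*C₁^2) * ENNReal.ofReal y⁻¹ := by
      intro y hy
      rw [← ENNReal.ofReal_mul (by positivity)]
      apply ENNReal.ofReal_le_ofReal
      have hy0 : (0:ℝ) < y := lt_trans hε0 hy.1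
      have h1 : min ε⁻¹ y⁻¹ ≤ y⁻¹ := min_le_right _ _
      have h2 : Real.exp (-c*y) ≤ 1 := by
        apply Real.exp_le_one_iff.2; nlinarith
      have h3 : (0:ℝ) < Real.exp (-c*y) := Real.exp_pos _
      have h4 : (0:ℝ) ≤ min ε⁻¹ y⁻¹ := le_min (by positivity) (inv_nonneg.2 hy0.le)
      have h5 : (1:ℝ) ≤ y⁻¹ := by
        nlinarith [mul_inv_cancel₀ (ne_of_gt hy0), inv_pos.2 hy0, hy.2]
      calc (6*C₁*min ε⁻¹ y⁻¹ + C₁) * (C₁ * Real.exp (-c*y))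
          ≤ (6*C₁*y⁻¹ + C₁*y⁻¹) * (C₁ * 1) := by
            apply mul_le_mul _ _ (by positivity) (by positivity)
            · nlinarith
            · nlinarith
        _ = 7*C₁^2*y⁻¹ := by ring
    have hint : ∫⁻ y in Ioc ε 1, ENNReal.ofReal y⁻¹ = ENNReal.ofReal |Real.log ε| := by
      have hiol : IntegrableOn (fun y : ℝ => y⁻¹) (Ioc ε 1) := by
        apply IntegrableOn.mono_set _ Ioc_subset_Icc_self
        apply ContinuousOn.integrableOn_Icc
        apply ContinuousOn.inv₀ continuousOn_id
        intro y hy; exact ne_of_gt (lt_of_lt_of_le hε0 hy.1)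
      rw [← ofReal_integral_eq_lintegral_ofReal hiol]
      · congr 1
        rw [← intervalIntegral.integral_of_le hε1.le, integral_inv
            (by rw [uIcc_of_le hε1.le]; intro h; exact absurd h.1 (not_le.2 hε0))]
        rw [one_div, Real.log_inv]
        rw [abs_of_neg (Real.log_neg hε0 hε1)]
      · filter_upwards [ae_restrict_mem measurableSet_Ioc] with y hy
        exact inv_nonneg.2 (by linarith [hy.1] : (0:ℝ) ≤ y)
    calc ∫⁻ y in Ioc ε 1, W y
        ≤ ∫⁻ y in Ioc ε 1, ENNReal.ofReal (7*C₁^2) * ENNReal.ofReal y⁻¹ :=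
          setLIntegral_mono (by fun_prop) hb
      _ = ENNReal.ofReal (7*C₁^2) * ∫⁻ y in Ioc ε 1, ENNReal.ofReal y⁻¹ :=
          lintegral_const_mul' _ _ ENNReal.ofReal_ne_top
      _ = _ := by rw [hint]
  -- bound on (1, ∞)
  have h3 : ∫⁻ y in Ioi (1:ℝ), W y ≤ ENNReal.ofReal (7*C₁^2/c) := by
    have hb : ∀ y ∈ Ioi (1:ℝ), W y ≤
        ENNReal.ofReal (7*C₁^2) * ENNReal.ofReal (Real.exp (-c*y)) := by
      intro y hy
      rw [← ENNReal.ofReal_mul (by positivity)]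
      apply ENNReal.ofReal_le_ofReal
      have hy1 : (1:ℝ) < y := hy
      have h1 : min ε⁻¹ y⁻¹ ≤ y⁻¹ := min_le_right _ _
      have h5 : y⁻¹ ≤ 1 := by
        rw [inv_le_one_iff₀]; right; linarith
      have h3 : (0:ℝ) < Real.exp (-c*y) := Real.exp_pos _
      have h4 : (0:ℝ) ≤ min ε⁻¹ y⁻¹ := le_min (by positivity) (inv_nonneg.2 (by linarith))
      calc (6*C₁*min ε⁻¹ y⁻¹ + C₁) * (C₁ * Real.exp (-c*y))
          ≤ (6*C₁*1 + C₁) * (C₁ * Real.exp (-c*y)) := by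
            apply mul_le_mul_of_nonneg_right _ (by positivity)
            nlinarith
        _ = 7*C₁^2 * Real.exp (-c*y) := by ring
    have hint : ∫⁻ y in Ioi (1:ℝ), ENNReal.ofReal (Real.exp (-c*y)) ≤ ENNReal.ofReal c⁻¹ := by
      rw [← ofReal_integral_eq_lintegral_ofReal (exp_neg_integrableOn_Ioi 1 hc)
        (by filter_upwards with y; positivity)]
      apply ENNReal.ofReal_le_ofReal
      have h := integral_comp_mul_left_Ioi (fun u => Real.exp (-u)) 1 hc
      simp only [mul_one, smul_eq_mul, integral_exp_neg_Ioi] at h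
      have h1 : Real.exp (-c) ≤ 1 := Real.exp_le_one_iff.2 (by linarith)
      have h2 : (0:ℝ) < c⁻¹ := by positivity
      calc ∫ y in Ioi (1:ℝ), Real.exp (-c*y)
          = ∫ y in Ioi (1:ℝ), Real.exp (-(c*y)) := by simp [neg_mul]
        _ = c⁻¹ * Real.exp (-c) := h
        _ ≤ c⁻¹ := by nlinarith
    calc ∫⁻ y in Ioi (1:ℝ), W y
        ≤ ∫⁻ y in Ioi (1:ℝ), ENNReal.ofReal (7*C₁^2) * ENNReal.ofReal (Real.exp (-c*y)) :=
          setLIntegral_mono (by fun_prop) hb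
      _ = ENNReal.ofReal (7*C₁^2) * ∫⁻ y in Ioi (1:ℝ), ENNReal.ofReal (Real.exp (-c*y)) :=
          lintegral_const_mul' _ _ ENNReal.ofReal_ne_top
      _ ≤ ENNReal.ofReal (7*C₁^2) * ENNReal.ofReal c⁻¹ := by gcongr
      _ = ENNReal.ofReal (7*C₁^2/c) := by
          rw [div_eq_mul_inv, ← ENNReal.ofReal_mul (by positivity)]
  -- combine
  have hlog : Real.log 2 ≤ |Real.log ε| := by
    have : Real.log ε < -Real.log 2 := by
      have := Real.log_lt_log hε0 hε
      rwa [show (1:ℝ)/2 = 2⁻¹ by norm_num, Real.log_inv] at this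
    rw [abs_of_neg (Real.log_neg hε0 hε1)]
    linarith
  have hlog2 : (1:ℝ) ≤ 2 * |Real.log ε| := by
    have h2 : (0.6931471803 : ℝ) < Real.log 2 := Real.log_two_gt_d9
    nlinarith
  calc ∫⁻ y in Ioi (0:ℝ), W y
      ≤ (∫⁻ y in Ioc (0:ℝ) ε, W y) + ((∫⁻ y in Ioc ε 1, W y) + ∫⁻ y in Ioi (1:ℝ), W y) := hsplit
    _ ≤ ENNReal.ofReal (7*C₁^2) + (ENNReal.ofReal (7*C₁^2) * ENNReal.ofReal |Real.log ε|
          + ENNReal.ofReal (7*C₁^2/c)) := by gcongr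
    _ = ENNReal.ofReal (7*C₁^2 + (7*C₁^2 * |Real.log ε| + 7*C₁^2/c)) := by
        rw [← ENNReal.ofReal_mul (by positivity), ← ENNReal.ofReal_add (by positivity)
          (by positivity), ← ENNReal.ofReal_add (by positivity) (by positivity)]
    _ ≤ ENNReal.ofReal (7*C₁^2*(3 + 2/c) * |Real.log ε|) := by
        apply ENNReal.ofReal_le_ofReal
        have habs : (0:ℝ) ≤ |Real.log ε| := abs_nonneg _
        have hc' : (0:ℝ) < c⁻¹ := by positivity
        have e1 : 7*C₁^2 ≤ 7*C₁^2 * (2*|Real.log ε|) := by nlinarith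
        have e2 : 7*C₁^2/c ≤ 7*C₁^2/c * (2*|Real.log ε|) := by
          have : (0:ℝ) < 7*C₁^2/c := by positivity
          nlinarith
        have : 7*C₁^2*(3 + 2/c) * |Real.log ε| =
            7*C₁^2 * (2*|Real.log ε|) + (7*C₁^2*|Real.log ε| + 7*C₁^2/c * (2*|Real.log ε|)) := by
          field_simp; ring
        rw [this]
        linarith

lemma my_min_inv_bound {ε a b : ℝ} (hε : 0 < ε) (ha : 0 < a) (hb : 0 ≤ b)
    (h : a - 5*ε ≤ b) : min ε⁻¹ b⁻¹ ≤ 6 * min ε⁻¹ a⁻¹ := by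
  rcases le_or_gt a (6*ε) with h6 | h6
  · have h1 : (6*ε)⁻¹ ≤ a⁻¹ := by
      apply inv_anti₀ ha h6
    have h2 : (6*ε)⁻¹ ≤ ε⁻¹ := by
      apply inv_anti₀ hε; nlinarith
    have h3 : (6:ℝ) * (6*ε)⁻¹ = ε⁻¹ := by field_simp
    calc min ε⁻¹ b⁻¹ ≤ ε⁻¹ := min_le_left _ _
      _ = 6 * (6*ε)⁻¹ := h3.symm
      _ ≤ 6 * min ε⁻¹ a⁻¹ := by
          apply mul_le_mul_of_nonneg_left (le_min h2 h1) (by norm_num)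
  · have hb0 : (0:ℝ) < b := by linarith
    have hba : a ≤ 6*b := by linarith
    have h1 : b⁻¹ ≤ 6 * a⁻¹ := by
      rw [show (6:ℝ) * a⁻¹ = (a/6)⁻¹ by field_simp]
      apply inv_anti₀ (by linarith) (by linarith)
    rcases min_cases ε⁻¹ a⁻¹ with ⟨hm, _⟩ | ⟨hm, _⟩
    · rw [hm]
      calc min ε⁻¹ b⁻¹ ≤ ε⁻¹ := min_le_left _ _
        _ ≤ 6 * ε⁻¹ := by nlinarith [inv_pos.2 hε]
    · rw [hm]
      calc min ε⁻¹ b⁻¹ ≤ b⁻¹ := min_le_right _ _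
        _ ≤ 6 * a⁻¹ := h1

lemma my_coord_le_dist (x y : E2) (i : Fin 2) : |x i - y i| ≤ dist x y := by
  rw [EuclideanSpace.dist_eq]
  have h1 : |x i - y i| = Real.sqrt (dist (x i) (y i) ^ 2) := by
    rw [Real.sqrt_sq dist_nonneg, Real.dist_eq]
  rw [h1]
  exact Real.sqrt_le_sqrt (Finset.single_le_sum
    (f := fun j => dist (x j) (y j) ^ 2) (fun j _ => sq_nonneg _) (Finset.mem_univ i))

lemma my_lattPt_apply (ε : ℝ) (z : ℤ × ℤ) :
    lattPt ε z 0 = ε * z.1 ∧ lattPt ε z 1 = ε * z.2 := by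
  constructor <;> rfl

lemma my_overlap {ε : ℝ} (hε : 0 < ε) (x : E2) (K : ℝ≥0∞) :
    ∑' z : ℤ × ℤ, (ball (lattPt ε z) (3*ε)).indicator (fun _ => K) x ≤ 49 * K := by
  set F : Finset (ℤ × ℤ) :=
    (Finset.Icc (⌊x 0 / ε⌋ - 3) (⌊x 0 / ε⌋ + 3)) ×ˢ
      (Finset.Icc (⌊x 1 / ε⌋ - 3) (⌊x 1 / ε⌋ + 3)) with hF
  have hmem : ∀ z : ℤ × ℤ, x ∈ ball (lattPt ε z) (3*ε) → z ∈ F := by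
    intro z hz
    rw [mem_ball] at hz
    have key : ∀ i : Fin 2, ∀ w : ℤ, lattPt ε z i = ε * w →
        ⌊x i / ε⌋ - 3 ≤ w ∧ w ≤ ⌊x i / ε⌋ + 3 := by
      intro i w hw
      have h1 : |x i - ε * w| < 3 * ε := by
        rw [← hw]
        exact lt_of_le_of_lt (my_coord_le_dist x (lattPt ε z) i) hz
      rw [abs_lt] at h1
      have hlow : x i / ε - 3 < w := by
        rw [div_sub' (ne_of_gt hε), div_lt_iff₀ hε]
        nlinarith [h1.2]
      have hhigh : (w:ℝ) < x i / ε + 3 := by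
        rw [div_add' _ _ _ (ne_of_gt hε), lt_div_iff₀ hε]
        nlinarith [h1.1]
      constructor
      · have : (⌊x i / ε⌋ : ℝ) ≤ x i / ε := Int.floor_le _
        have : (⌊x i / ε⌋ : ℝ) < w + 3 := by linarith
        have := Int.cast_lt.1 (by push_cast; linarith : ((⌊x i / ε⌋ : ℤ) : ℝ) < ((w + 3 : ℤ) : ℝ))
        omega
      · have : (w - 3 : ℝ) ≤ x i / ε := by linarith
        have := Int.le_floor.2 (by push_cast; linarith : ((w - 3 : ℤ) : ℝ) ≤ x i / ε)
        omega
    have h0 := key 0 z.1 (my_lattPt_apply ε z).1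
    have h1 := key 1 z.2 (my_lattPt_apply ε z).2
    rw [hF, Finset.mem_product]
    exact ⟨Finset.mem_Icc.2 ⟨h0.1, h0.2⟩, Finset.mem_Icc.2 ⟨h1.1, h1.2⟩⟩
  have hzero : ∀ z : ℤ × ℤ, z ∉ F →
      (ball (lattPt ε z) (3*ε)).indicator (fun _ => K) x = 0 := by
    intro z hz
    apply Set.indicator_of_notMem
    intro hx
    exact hz (hmem z hx)
  rw [tsum_eq_sum hzero]
  calc ∑ z ∈ F, (ball (lattPt ε z) (3*ε)).indicator (fun _ => K) x
      ≤ ∑ _z ∈ F, K := Finset.sum_le_sum (fun z _ => Set.indicator_apply_le (fun _ => le_rfl))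
    _ = F.card * K := by rw [Finset.sum_const, nsmul_eq_mul]
    _ ≤ 49 * K := by
        apply mul_le_mul_left
        have h7 : ∀ n : ℤ, (n + 3 + 1 - (n - 3)).toNat = 7 := by intro n; omega
        have : F.card = 49 := by
          rw [hF, Finset.card_product, Int.card_Icc, Int.card_Icc, h7, h7]
        rw [this]
        norm_num

lemma my_ball_vol {ε : ℝ} (hε : 0 < ε) (p : E2) :
    volume (ball p (2*ε)) ≤ ENNReal.ofReal (4*π*ε^2) := by
  rw [EuclideanSpace.volume_ball]
  have hcard : (Fintype.card (Fin 2)) = 2 := by simp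
  rw [hcard]
  have h1 : Real.Gamma (((2:ℕ):ℝ)/2 + 1) = 1 := by norm_num
  rw [h1]
  rw [← ENNReal.ofReal_pow (by positivity)]
  rw [← ENNReal.ofReal_mul (by positivity)]
  apply ENNReal.ofReal_le_ofReal
  rw [Real.sq_sqrt pi_nonneg]
  nlinarith [pi_nonneg, sq_nonneg ε]

end Helpers

/-- if μ(dx) ≤ C₁ min(ε⁻¹,|x|⁻¹) dx + C₁ dx and
ν(dx) ≤ C₁ |x|⁻¹ e^{-c|x|} dx, then
ε⁻¹ Σ_{z ∈ ℤ²} μ(B(εz,2ε)) ν(B(εz,3ε)) ≤ C₂ ε |log ε|, with C₂ = C₂(C₁, c). -/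
theorem stmt13 (C₁ c : ℝ) (hC₁ : 0 < C₁) (hc : 0 < c) :
    ∃ C₂ : ℝ, ∀ ε : ℝ, ε ∈ Ioo 0 (1 / 2 : ℝ) →
      ∀ μ ν : Measure (EuclideanSpace ℝ (Fin 2)),
        IsFiniteMeasure μ → IsFiniteMeasure ν →
        (∀ A : Set (EuclideanSpace ℝ (Fin 2)), MeasurableSet A →
          μ A ≤ ∫⁻ x in A, ENNReal.ofReal (C₁ * min ε⁻¹ ‖x‖⁻¹ + C₁)) →
        (∀ A : Set (EuclideanSpace ℝ (Fin 2)), MeasurableSet A →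
          ν A ≤ ∫⁻ x in A, ENNReal.ofReal (C₁ * ‖x‖⁻¹ * Real.exp (-c * ‖x‖))) →
        (ENNReal.ofReal ε)⁻¹ *
            ∑' z : ℤ × ℤ, μ (Metric.ball (lattPt ε z) (2 * ε)) *
              ν (Metric.ball (lattPt ε z) (3 * ε)) ≤
          ENNReal.ofReal (C₂ * ε * |Real.log ε|) := by
  classical
  use 2744 * π^2 * C₁^2 * (3 + 2/c)
  rintro ε ⟨hε0, hehalf⟩ μ ν hμfin hνfin hμ hν
  have hε1 : ε < 1 := by linarith
  set f1 : ℝ → ℝ≥0∞ := fun r =>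
    ENNReal.ofReal ((6*C₁*min ε⁻¹ r⁻¹ + C₁) * (C₁ * r⁻¹ * Real.exp (-c*r))) with hf1
  have hf1meas : Measurable f1 := by
    apply Measurable.ennreal_ofReal
    fun_prop
  set K : EuclideanSpace ℝ (Fin 2) → ℝ≥0∞ := fun x =>
    ENNReal.ofReal (4*π*ε^2) * f1 ‖x‖ with hK
  have hKmeas : Measurable K := (hf1meas.comp measurable_norm).const_mul _
  have hφg : ∀ x : EuclideanSpace ℝ (Fin 2),
      f1 ‖x‖ = ENNReal.ofReal ((6*C₁*min ε⁻¹ ‖x‖⁻¹ + C₁) *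
        (C₁ * ‖x‖⁻¹ * Real.exp (-c*‖x‖))) := fun x => rfl
  have hae : ∀ᵐ (x : EuclideanSpace ℝ (Fin 2)) ∂volume, x ≠ (0:EuclideanSpace ℝ (Fin 2)) := by
    have h0 : volume ({(0:EuclideanSpace ℝ (Fin 2))} : Set (EuclideanSpace ℝ (Fin 2))) = 0 :=
      measure_singleton _
    rw [ae_iff]
    simpa using h0
  -- Step A : per-ball bound
  have stepA : ∀ z : ℤ × ℤ,
      μ (Metric.ball (lattPt ε z) (2 * ε)) * ν (Metric.ball (lattPt ε z) (3 * ε)) ≤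
        ∫⁻ x in Metric.ball (lattPt ε z) (3 * ε), K x := by
    intro z
    set p := lattPt ε z with hp
    have haz : ∀ x : EuclideanSpace ℝ (Fin 2), x ∈ Metric.ball p (3*ε) →
        x ≠ 0 →
        μ (Metric.ball p (2*ε)) ≤ ENNReal.ofReal (4*π*ε^2) *
          ENNReal.ofReal (6*C₁*min ε⁻¹ ‖x‖⁻¹ + C₁) := by
      intro x hx hx0
      have hxnorm : 0 < ‖x‖ := norm_pos_iff.2 hx0
      have hmono : ∀ y : EuclideanSpace ℝ (Fin 2), y ∈ Metric.ball p (2*ε) →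
          C₁ * min ε⁻¹ ‖y‖⁻¹ + C₁ ≤ 6*C₁*min ε⁻¹ ‖x‖⁻¹ + C₁ := by
        intro y hy
        have hdist : ‖x‖ - 5*ε ≤ ‖y‖ := by
          have h2 : dist y p < 2*ε := Metric.mem_ball.1 hy
          have h3 : dist p x < 3*ε := by rw [dist_comm]; exact Metric.mem_ball.1 hx
          have h4 := dist_triangle y p x
          have h5 := norm_sub_norm_le x y
          rw [← dist_eq_norm, dist_comm] at h5
          linarith
        have hkey := my_min_inv_bound hε0 hxnorm (norm_nonneg y) hdist
        nlinarith
      calc μ (Metric.ball p (2*ε))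
          ≤ ∫⁻ y in Metric.ball p (2*ε), ENNReal.ofReal (C₁ * min ε⁻¹ ‖y‖⁻¹ + C₁) :=
            hμ _ measurableSet_ball
        _ ≤ ∫⁻ _ in Metric.ball p (2*ε), ENNReal.ofReal (6*C₁*min ε⁻¹ ‖x‖⁻¹ + C₁) :=
            setLIntegral_mono measurable_const
              (fun y hy => ENNReal.ofReal_le_ofReal (hmono y hy))
        _ = ENNReal.ofReal (6*C₁*min ε⁻¹ ‖x‖⁻¹ + C₁) * volume (Metric.ball p (2*ε)) :=
            setLIntegral_const _ _
        _ ≤ ENNReal.ofReal (6*C₁*min ε⁻¹ ‖x‖⁻¹ + C₁) * ENNReal.ofReal (4*π*ε^2) := by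
            gcongr
            exact my_ball_vol hε0 p
        _ = ENNReal.ofReal (4*π*ε^2) * ENNReal.ofReal (6*C₁*min ε⁻¹ ‖x‖⁻¹ + C₁) :=
            mul_comm _ _
    have h2eq : (2:ℝ) * ε = 2*ε := rfl
    calc μ (Metric.ball p (2 * ε)) * ν (Metric.ball p (3 * ε))
        ≤ μ (Metric.ball p (2*ε)) *
            ∫⁻ x in Metric.ball p (3*ε), ENNReal.ofReal (C₁ * ‖x‖⁻¹ * Real.exp (-c * ‖x‖)) := by
          gcongr
          exact hν _ measurableSet_ball
      _ = ∫⁻ x in Metric.ball p (3*ε),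
            μ (Metric.ball p (2*ε)) * ENNReal.ofReal (C₁ * ‖x‖⁻¹ * Real.exp (-c * ‖x‖)) :=
          (lintegral_const_mul' _ _ (measure_ne_top μ _)).symm
      _ ≤ ∫⁻ x in Metric.ball p (3*ε), K x := by
          apply setLIntegral_mono_ae (hKmeas.aemeasurable.restrict)
          filter_upwards [hae] with x hx0 hx
          have hφ_nonneg : (0:ℝ) ≤ 6*C₁*min ε⁻¹ ‖x‖⁻¹ + C₁ := by
            have : (0:ℝ) ≤ min ε⁻¹ ‖x‖⁻¹ :=
              le_min (inv_nonneg.2 hε0.le) (inv_nonneg.2 (norm_nonneg x))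
            positivity
          calc μ (Metric.ball p (2*ε)) * ENNReal.ofReal (C₁ * ‖x‖⁻¹ * Real.exp (-c * ‖x‖))
              ≤ (ENNReal.ofReal (4*π*ε^2) * ENNReal.ofReal (6*C₁*min ε⁻¹ ‖x‖⁻¹ + C₁)) *
                  ENNReal.ofReal (C₁ * ‖x‖⁻¹ * Real.exp (-c * ‖x‖)) :=
                mul_le_mul_left (haz x hx hx0) _
            _ = K x := by
                show _ = ENNReal.ofReal (4*π*ε^2) * f1 ‖x‖
                rw [hφg x, mul_assoc, ← ENNReal.ofReal_mul hφ_nonneg]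
  -- Step B : sum over z, bounded overlap
  have stepB : (∑' z : ℤ × ℤ, μ (Metric.ball (lattPt ε z) (2 * ε)) *
      ν (Metric.ball (lattPt ε z) (3 * ε))) ≤ 49 * ∫⁻ x, K x := by
    calc (∑' z : ℤ × ℤ, μ (Metric.ball (lattPt ε z) (2 * ε)) *
        ν (Metric.ball (lattPt ε z) (3 * ε)))
        ≤ ∑' z : ℤ × ℤ, ∫⁻ x in Metric.ball (lattPt ε z) (3 * ε), K x :=
          ENNReal.tsum_le_tsum stepA
      _ = ∑' z : ℤ × ℤ, ∫⁻ x, (Metric.ball (lattPt ε z) (3 * ε)).indicator K x := by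
          congr 1
          funext z
          rw [lintegral_indicator measurableSet_ball]
      _ = ∫⁻ x, ∑' z : ℤ × ℤ, (Metric.ball (lattPt ε z) (3 * ε)).indicator K x :=
          (lintegral_tsum (fun z => (hKmeas.indicator measurableSet_ball).aemeasurable)).symm
      _ ≤ ∫⁻ x, 49 * K x := by
          apply lintegral_mono
          intro x
          calc ∑' z : ℤ × ℤ, (Metric.ball (lattPt ε z) (3 * ε)).indicator K x
              = ∑' z : ℤ × ℤ, (Metric.ball (lattPt ε z) (3 * ε)).indicator
                  (fun _ => K x) x :=
                tsum_congr (fun z => by simp [Set.indicator_apply])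
            _ ≤ 49 * K x := by
                have := my_overlap hε0 x (K x)
                simpa using this
      _ = 49 * ∫⁻ x, K x := lintegral_const_mul' _ _ (by norm_num)
  -- Step C : evaluate/bound the integral of K via polar coordinates
  have stepC : (∫⁻ x, K x) ≤ ENNReal.ofReal (4*π*ε^2) * (ENNReal.ofReal (2*π) *
      ENNReal.ofReal (7*C₁^2*(3 + 2/c) * |Real.log ε|)) := by
    have h1 : (∫⁻ x, K x) = ENNReal.ofReal (4*π*ε^2) *
        ∫⁻ x : EuclideanSpace ℝ (Fin 2), f1 ‖x‖ :=
      lintegral_const_mul' _ _ ENNReal.ofReal_ne_top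
    rw [h1, my_lintegral_norm_polar f1 hf1meas]
    rw [← mul_assoc]
    rw [mul_assoc (ENNReal.ofReal (4*π*ε^2))]
    gcongr
    have hcongr : (∫⁻ y in Ioi (0:ℝ), ENNReal.ofReal y * f1 y) =
        ∫⁻ y in Ioi (0:ℝ),
          ENNReal.ofReal ((6*C₁*min ε⁻¹ y⁻¹ + C₁) * (C₁ * Real.exp (-c*y))) := by
      apply setLIntegral_congr_fun measurableSet_Ioi
      intro y hy
      have hy0 : (0:ℝ) < y := hy
      beta_reduce
      rw [hf1, ← ENNReal.ofReal_mul hy0.le]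
      congr 1
      field_simp
    rw [hcongr]
    exact my_radial_bound C₁ c ε hC₁ hc hε0 hehalf
  -- Assemble
  have htot : (∑' z : ℤ × ℤ, μ (Metric.ball (lattPt ε z) (2 * ε)) *
      ν (Metric.ball (lattPt ε z) (3 * ε))) ≤
      ENNReal.ofReal ε * ENNReal.ofReal (2744 * π^2 * C₁^2 * (3 + 2/c) * ε * |Real.log ε|) := by
    calc (∑' z : ℤ × ℤ, μ (Metric.ball (lattPt ε z) (2 * ε)) *
        ν (Metric.ball (lattPt ε z) (3 * ε)))
        ≤ 49 * ∫⁻ x, K x := stepB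
      _ ≤ 49 * (ENNReal.ofReal (4*π*ε^2) * (ENNReal.ofReal (2*π) *
            ENNReal.ofReal (7*C₁^2*(3 + 2/c) * |Real.log ε|))) := by gcongr
      _ = ENNReal.ofReal 49 * (ENNReal.ofReal (4*π*ε^2) * (ENNReal.ofReal (2*π) *
            ENNReal.ofReal (7*C₁^2*(3 + 2/c) * |Real.log ε|))) := by
          norm_num
      _ = ENNReal.ofReal (49 * (4*π*ε^2 * (2*π * (7*C₁^2*(3 + 2/c) * |Real.log ε|)))) := by
          rw [← ENNReal.ofReal_mul (by positivity), ← ENNReal.ofReal_mul (by positivity),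
            ← ENNReal.ofReal_mul (by norm_num)]
      _ = ENNReal.ofReal ε *
            ENNReal.ofReal (2744 * π^2 * C₁^2 * (3 + 2/c) * ε * |Real.log ε|) := by
          rw [← ENNReal.ofReal_mul hε0.le]
          congr 1
          ring
  calc (ENNReal.ofReal ε)⁻¹ *
      ∑' z : ℤ × ℤ, μ (Metric.ball (lattPt ε z) (2 * ε)) *
        ν (Metric.ball (lattPt ε z) (3 * ε))
      ≤ (ENNReal.ofReal ε)⁻¹ * (ENNReal.ofReal ε *
          ENNReal.ofReal (2744 * π^2 * C₁^2 * (3 + 2/c) * ε * |Real.log ε|)) :=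
        mul_le_mul_right htot _
    _ = ENNReal.ofReal (2744 * π^2 * C₁^2 * (3 + 2/c) * ε * |Real.log ε|) := by
        rw [← mul_assoc, ENNReal.inv_mul_cancel (ENNReal.ofReal_pos.2 hε0).ne'
          ENNReal.ofReal_ne_top, one_mul]
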